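/- Let H ∈ (0,1/2) and define φ(v,T) = ∫₀ᵀ∫₀ᵀ e^{-|u-w|} u^{H-1} |∂R^B(v,w)/∂v| du dw where ∂R^B(v,w)/∂v = H(v^{2H-1} - sgn(v-w)|v-w|^{2H-1}). Then lim_{T→∞} φ(T,T)/T^{3H-1} = 2(B(2H,H)·H - 1), where B is the Beta function. -/

import Mathlib

open MeasureTheory Real Set Filter

lemma st8_rpow_integrable {H : ℝ} (hH : 0 < H) (b : ℝ) :
    IntegrableOn (fun t : ℝ => t ^ (H - 1)) (Ioc 0 b) := by
  have := (intervalIntegral.intervalIntegrable_rpow' (a := 0) (b := b)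
    (r := H - 1) (by linarith)).1
  simpa [MeasureTheory.IntegrableOn] using this

lemma st8_int_rpow {H : ℝ} (hH : 0 < H) {b : ℝ} (hb : 0 ≤ b) :
    ∫ t in Ioc (0:ℝ) b, t ^ (H - 1) = b ^ H / H := by
  rw [← intervalIntegral.integral_of_le hb,
    integral_rpow (Or.inl (by linarith))]
  simp [sub_add_cancel, Real.zero_rpow (by positivity : H ≠ 0)]

lemma st8_ker_cont (T s : ℝ) : Continuous (fun t : ℝ => Real.exp (-(T * |t - s|))) := by
  continuity

lemma st8_ker_int (T s a b : ℝ) :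
    IntegrableOn (fun t : ℝ => Real.exp (-(T * |t - s|))) (Ioc a b) :=
  (st8_ker_cont T s).integrableOn_Ioc

lemma st8_exp_integral {T : ℝ} (hT : T ≠ 0) (a b : ℝ) :
    ∫ x in a..b, Real.exp (T * x) = (Real.exp (T * b) - Real.exp (T * a)) / T := by
  rw [intervalIntegral.integral_comp_mul_left (fun x => Real.exp x) hT, integral_exp,
    smul_eq_mul]
  field_simp

lemma st8_ker_formula {T δ : ℝ} (hT : 0 < T) (hδ : 0 < δ) (s : ℝ) :
    T * ∫ t in Ioc (s - δ) (s + δ), Real.exp (-(T * |t - s|)) =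
      2 * (1 - Real.exp (-(T * δ))) := by
  have h1 : s - δ ≤ s := by linarith
  have h2 : s ≤ s + δ := by linarith
  rw [← intervalIntegral.integral_of_le (by linarith : s - δ ≤ s + δ),
    ← intervalIntegral.integral_add_adjacent_intervals (b := s)
      (((st8_ker_cont T s).intervalIntegrable _ _))
      (((st8_ker_cont T s).intervalIntegrable _ _))]
  have e1 : ∫ t in (s-δ)..s, Real.exp (-(T * |t - s|)) =
      ∫ t in (s-δ)..s, Real.exp (T * t) * Real.exp (-(T * s)) := by
    apply intervalIntegral.integral_congr
    intro t ht
    rw [uIcc_of_le h1] at ht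
    show Real.exp (-(T * |t - s|)) = Real.exp (T * t) * Real.exp (-(T * s))
    rw [abs_of_nonpos (by linarith [ht.2]), ← Real.exp_add]; ring_nf
  have e2 : ∫ t in s..(s+δ), Real.exp (-(T * |t - s|)) =
      ∫ t in s..(s+δ), Real.exp (-T * t) * Real.exp (T * s) := by
    apply intervalIntegral.integral_congr
    intro t ht
    rw [uIcc_of_le h2] at ht
    show Real.exp (-(T * |t - s|)) = Real.exp (-T * t) * Real.exp (T * s)
    rw [abs_of_nonneg (by linarith [ht.1]), ← Real.exp_add]; ring_nf
  rw [e1, e2, intervalIntegral.integral_mul_const, intervalIntegral.integral_mul_const,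
    st8_exp_integral hT.ne', st8_exp_integral (by linarith : (-T : ℝ) ≠ 0)]
  have ha : Real.exp (T*(s-δ)) = Real.exp (T*s) * Real.exp (-(T*δ)) := by
    rw [← Real.exp_add]; ring_nf
  have hb : Real.exp (-T*(s+δ)) = Real.exp (-T*s) * Real.exp (-(T*δ)) := by
    rw [← Real.exp_add]; ring_nf
  have hc : Real.exp (-T*s) * Real.exp (T*s) = 1 := by
    rw [← Real.exp_add]; simp
  have hd : Real.exp (-(T*s)) = Real.exp (-T*s) := by ring_nf
  rw [ha, hb, hd]
  have key : ∀ X Y c d : ℝ, T * (X / T * c + Y / (-T) * d) = X * c - Y * d := by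
    intro X Y c d
    have hT0 : T ≠ 0 := hT.ne'
    rw [div_mul_eq_mul_div, div_mul_eq_mul_div, div_neg, ← sub_eq_add_neg,
      div_sub_div_same, mul_comm T, div_mul_cancel₀ _ hT0]
  rw [key]
  linear_combination (2 * (1 - Real.exp (-(T*δ)))) * hc

noncomputable def st8G (H T s : ℝ) : ℝ :=
  T * ∫ t in Ioc (0:ℝ) 1, Real.exp (-(T * |t - s|)) * t ^ (H - 1)

lemma st8_integrand_nonneg {H T : ℝ} (hT : 0 ≤ T) (s : ℝ) {t : ℝ} (ht : 0 ≤ t) :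
    0 ≤ Real.exp (-(T * |t - s|)) * t ^ (H - 1) := by positivity

lemma st8_integrand_le {H T : ℝ} (hT : 0 ≤ T) (s : ℝ) {t : ℝ} (ht : 0 ≤ t) :
    Real.exp (-(T * |t - s|)) * t ^ (H - 1) ≤ t ^ (H - 1) := by
  have h1 : Real.exp (-(T * |t - s|)) ≤ 1 := by
    rw [Real.exp_le_one_iff]
    have : 0 ≤ T * |t - s| := by positivity
    linarith
  calc Real.exp (-(T * |t - s|)) * t ^ (H - 1) ≤ 1 * t ^ (H - 1) := by
        apply mul_le_mul_of_nonneg_right h1 (Real.rpow_nonneg ht _)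
    _ = t ^ (H - 1) := one_mul _

lemma st8_integrand_int {H : ℝ} (hH : 0 < H) {T : ℝ} (hT : 0 ≤ T) (s : ℝ) :
    IntegrableOn (fun t : ℝ => Real.exp (-(T * |t - s|)) * t ^ (H - 1)) (Ioc 0 1) := by
  apply Integrable.mono' (st8_rpow_integrable hH 1)
  · exact ((st8_ker_cont T s).measurable.mul
      (measurable_id.pow_const (H - 1))).aestronglyMeasurable
  · rw [ae_restrict_iff' measurableSet_Ioc]
    filter_upwards with t ht
    rw [Real.norm_eq_abs, abs_of_nonneg (st8_integrand_nonneg hT s ht.1.le)]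
    exact st8_integrand_le hT s ht.1.le

lemma st8G_nonneg {H T : ℝ} (hT : 0 ≤ T) (s : ℝ) : 0 ≤ st8G H T s := by
  apply mul_nonneg hT
  apply setIntegral_nonneg measurableSet_Ioc
  intro t ht
  exact st8_integrand_nonneg hT s ht.1.le

lemma st8_ker_int_le {T δ : ℝ} (hT : 0 < T) (hδ : 0 < δ) (s : ℝ) {B : Set ℝ}
    (hB : B ⊆ Ioc (s - δ) (s + δ)) :
    T * ∫ t in B, Real.exp (-(T * |t - s|)) ≤ 2 := by
  have h1 : T * ∫ t in B, Real.exp (-(T * |t - s|)) ≤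
      T * ∫ t in Ioc (s - δ) (s + δ), Real.exp (-(T * |t - s|)) := by
    apply mul_le_mul_of_nonneg_left _ hT.le
    apply setIntegral_mono_set (st8_ker_int T s _ _)
    · filter_upwards with t using (Real.exp_pos _).le
    · exact HasSubset.Subset.eventuallyLE hB
  rw [st8_ker_formula hT hδ s] at h1
  nlinarith [Real.exp_pos (-(T * δ))]

lemma st8G_upper {H T s δ : ℝ} (hH : 0 < H) (hH1 : H < 1) (hs0 : 0 < s)
    (hδ0 : 0 < δ) (hδs : δ < s) (hT : 0 < T) :
    st8G H T s ≤ 2 * (s - δ) ^ (H - 1) + T * Real.exp (-(T * δ)) * (1 / H) := by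
  set f : ℝ → ℝ := fun t => Real.exp (-(T * |t - s|)) * t ^ (H - 1) with hf
  set A : Set ℝ := Ioc (s - δ) (s + δ) with hA
  have hint : IntegrableOn f (Ioc 0 1) := st8_integrand_int hH hT.le s
  have hsplit : (∫ t in Ioc (0:ℝ) 1 ∩ A, f t) + ∫ t in Ioc (0:ℝ) 1 \ A, f t
      = ∫ t in Ioc (0:ℝ) 1, f t :=
    integral_inter_add_diff measurableSet_Ioc hint
  have hnear : ∫ t in Ioc (0:ℝ) 1 ∩ A, f t ≤
      (∫ t in A, Real.exp (-(T * |t - s|))) * (s - δ) ^ (H - 1) := by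
    have step1 : ∫ t in Ioc (0:ℝ) 1 ∩ A, f t ≤
        ∫ t in Ioc (0:ℝ) 1 ∩ A, Real.exp (-(T * |t - s|)) * (s - δ) ^ (H - 1) := by
      apply setIntegral_mono_on
      · exact hint.mono_set inter_subset_left
      · exact IntegrableOn.mono_set ((st8_ker_int T s (s-δ) (s+δ)).mul_const _)
          inter_subset_right
      · exact measurableSet_Ioc.inter measurableSet_Ioc
      · intro t ht
        apply mul_le_mul_of_nonneg_left _ (Real.exp_pos _).le
        exact Real.rpow_le_rpow_of_nonpos (by linarith [ht.2.1]) ht.2.1.le (by linarith)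
    have step2 : ∫ t in Ioc (0:ℝ) 1 ∩ A, Real.exp (-(T * |t - s|)) * (s - δ) ^ (H - 1)
        ≤ ∫ t in A, Real.exp (-(T * |t - s|)) * (s - δ) ^ (H - 1) := by
      apply setIntegral_mono_set ((st8_ker_int T s (s-δ) (s+δ)).mul_const _)
      · filter_upwards with t
        exact mul_nonneg (Real.exp_pos _).le (Real.rpow_nonneg (by linarith) _)
      · exact HasSubset.Subset.eventuallyLE inter_subset_right
    simp only [integral_mul_const] at step1 step2
    linarith
  have hfar : ∫ t in Ioc (0:ℝ) 1 \ A, f t ≤ Real.exp (-(T * δ)) * (1 / H) := by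
    have step1 : ∫ t in Ioc (0:ℝ) 1 \ A, f t ≤
        ∫ t in Ioc (0:ℝ) 1 \ A, Real.exp (-(T * δ)) * t ^ (H - 1) := by
      apply setIntegral_mono_on
      · exact hint.mono_set diff_subset
      · exact IntegrableOn.mono_set ((st8_rpow_integrable hH 1).const_mul _) diff_subset
      · exact measurableSet_Ioc.diff measurableSet_Ioc
      · intro t ht
        apply mul_le_mul_of_nonneg_right _ (Real.rpow_nonneg ht.1.1.le _)
        apply Real.exp_le_exp.2
        have habs : δ ≤ |t - s| := by
          rcases not_and_or.1 ht.2 with h | h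
          · push_neg at h
            exact le_abs.2 (Or.inr (by linarith))
          · push_neg at h
            exact le_abs.2 (Or.inl (by linarith))
        nlinarith
    have step2 : ∫ t in Ioc (0:ℝ) 1 \ A, Real.exp (-(T * δ)) * t ^ (H - 1)
        ≤ ∫ t in Ioc (0:ℝ) 1, Real.exp (-(T * δ)) * t ^ (H - 1) := by
      apply setIntegral_mono_set ((st8_rpow_integrable hH 1).const_mul _)
      · filter_upwards [ae_restrict_mem measurableSet_Ioc] with t ht
        exact mul_nonneg (Real.exp_pos _).le (Real.rpow_nonneg ht.1.le _)
      · exact HasSubset.Subset.eventuallyLE diff_subset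
    simp only [integral_const_mul] at step1 step2
    rw [st8_int_rpow hH (zero_le_one), Real.one_rpow] at step2
    linarith
  have hform := st8_ker_int_le hT hδ0 s (le_refl A)
  have hpos : (0:ℝ) ≤ (s - δ) ^ (H - 1) := Real.rpow_nonneg (by linarith) _
  have : st8G H T s = T * ((∫ t in Ioc (0:ℝ) 1 ∩ A, f t) + ∫ t in Ioc (0:ℝ) 1 \ A, f t) := by
    rw [hsplit]; rfl
  rw [this]
  have h2 : T * ∫ t in Ioc (0:ℝ) 1 ∩ A, f t ≤ 2 * (s - δ) ^ (H - 1) := by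
    calc T * ∫ t in Ioc (0:ℝ) 1 ∩ A, f t
        ≤ T * ((∫ t in A, Real.exp (-(T * |t - s|))) * (s - δ) ^ (H - 1)) :=
          mul_le_mul_of_nonneg_left hnear hT.le
      _ = (T * ∫ t in A, Real.exp (-(T * |t - s|))) * (s - δ) ^ (H - 1) := by ring
      _ ≤ 2 * (s - δ) ^ (H - 1) :=
          mul_le_mul_of_nonneg_right (st8_ker_int_le hT hδ0 s (le_refl A)) hpos
  have h3 : T * ∫ t in Ioc (0:ℝ) 1 \ A, f t ≤ T * (Real.exp (-(T * δ)) * (1 / H)) :=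
    mul_le_mul_of_nonneg_left hfar hT.le
  nlinarith [h2, h3]

lemma st8G_lower {H T s δ : ℝ} (hH : 0 < H) (hH1 : H < 1) (hs1 : s + δ ≤ 1)
    (hδ0 : 0 < δ) (hδs : δ < s) (hT : 0 < T) :
    (2 - 2 * Real.exp (-(T * δ))) * (s + δ) ^ (H - 1) ≤ st8G H T s := by
  set f : ℝ → ℝ := fun t => Real.exp (-(T * |t - s|)) * t ^ (H - 1) with hf
  set A : Set ℝ := Ioc (s - δ) (s + δ) with hA
  have hsub : A ⊆ Ioc 0 1 := Ioc_subset_Ioc (by linarith) hs1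
  have hint : IntegrableOn f (Ioc 0 1) := st8_integrand_int hH hT.le s
  have h1 : ∫ t in A, Real.exp (-(T * |t - s|)) * (s + δ) ^ (H - 1) ≤ ∫ t in A, f t := by
    apply setIntegral_mono_on
    · exact (st8_ker_int T s _ _).mul_const _
    · exact hint.mono_set hsub
    · exact measurableSet_Ioc
    · intro t ht
      apply mul_le_mul_of_nonneg_left _ (Real.exp_pos _).le
      exact Real.rpow_le_rpow_of_nonpos (by linarith [ht.1]) ht.2 (by linarith)
  have h2 : ∫ t in A, f t ≤ ∫ t in Ioc (0:ℝ) 1, f t := by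
    apply setIntegral_mono_set hint
    · filter_upwards [ae_restrict_mem measurableSet_Ioc] with t ht
      exact st8_integrand_nonneg hT.le s ht.1.le
    · exact HasSubset.Subset.eventuallyLE hsub
  rw [integral_mul_const] at h1
  have h3 := st8_ker_formula hT hδ0 s
  have key : (2 - 2 * Real.exp (-(T * δ))) * (s + δ) ^ (H - 1) =
      (T * ∫ t in A, Real.exp (-(T * |t - s|))) * (s + δ) ^ (H - 1) := by
    rw [h3]; ring
  rw [key]
  have : (T * ∫ t in A, Real.exp (-(T * |t - s|))) * (s + δ) ^ (H - 1) =
      T * ((∫ t in A, Real.exp (-(T * |t - s|))) * (s + δ) ^ (H - 1)) := by ring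
  rw [this]
  exact mul_le_mul_of_nonneg_left (h1.trans h2) hT.le

lemma st8G_bound {H T s : ℝ} (hH : 0 < H) (hH1 : H < 1) (hs0 : 0 < s) (hs1 : s ≤ 1)
    (hT : 1 ≤ T) : st8G H T s ≤ (4 + 2 / H) * s ^ (H - 1) := by
  have hT0 : 0 < T := lt_of_lt_of_le one_pos hT
  set f : ℝ → ℝ := fun t => Real.exp (-(T * |t - s|)) * t ^ (H - 1) with hf
  have hint : IntegrableOn f (Ioc 0 1) := st8_integrand_int hH hT0.le s
  have hs2 : (0:ℝ) < s / 2 := by linarith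
  have hsub1 : Ioc (0:ℝ) (s/2) ⊆ Ioc 0 1 := Ioc_subset_Ioc le_rfl (by linarith)
  have hsub2 : Ioc (s/2) 1 ⊆ Ioc (0:ℝ) 1 := Ioc_subset_Ioc (by linarith) le_rfl
  have hsplit : ∫ t in Ioc (0:ℝ) 1, f t =
      (∫ t in Ioc (0:ℝ) (s/2), f t) + ∫ t in Ioc (s/2) 1, f t := by
    rw [← Ioc_union_Ioc_eq_Ioc (le_of_lt hs2) (by linarith : s/2 ≤ 1),
      setIntegral_union (Ioc_disjoint_Ioc_of_le le_rfl) measurableSet_Ioc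
        (hint.mono_set hsub1) (hint.mono_set hsub2)]
  have part1 : T * ∫ t in Ioc (0:ℝ) (s/2), f t ≤ (2 / H) * s ^ (H - 1) := by
    have step1 : ∫ t in Ioc (0:ℝ) (s/2), f t ≤
        ∫ t in Ioc (0:ℝ) (s/2), Real.exp (-(T * (s/2))) * t ^ (H - 1) := by
      apply setIntegral_mono_on (hint.mono_set hsub1)
        (IntegrableOn.mono_set ((st8_rpow_integrable hH 1).const_mul _) hsub1)
        measurableSet_Ioc
      intro t ht
      apply mul_le_mul_of_nonneg_right _ (Real.rpow_nonneg ht.1.le _)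
      apply Real.exp_le_exp.2
      have : s / 2 ≤ |t - s| := by
        rw [abs_of_nonpos (by linarith [ht.2])]
        linarith [ht.2]
      nlinarith
    simp only [integral_const_mul] at step1
    rw [st8_int_rpow hH hs2.le] at step1
    have hTe : T * Real.exp (-(T * (s/2))) ≤ 2 / s := by
      have h1 : T * s / 2 + 1 ≤ Real.exp (T * s / 2) := Real.add_one_le_exp _
      have h2 : Real.exp (-(T * (s/2))) = (Real.exp (T * s / 2))⁻¹ := by
        rw [← Real.exp_neg]; ring_nf
      have hep : 0 < Real.exp (T * s / 2) := Real.exp_pos _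
      rw [h2, le_div_iff₀ hs0]
      have hinv : 0 < (Real.exp (T * s / 2))⁻¹ := by positivity
      have hc : Real.exp (T * s / 2) * (Real.exp (T * s / 2))⁻¹ = 1 :=
        mul_inv_cancel₀ hep.ne'
      nlinarith [h1, hinv, hc, hT0, hs0]
    have hq : (s/2) ^ H ≤ s ^ H := Real.rpow_le_rpow hs2.le (by linarith) hH.le
    have heq : (2 / s) * (s ^ H / H) = (2 / H) * s ^ (H - 1) := by
      rw [Real.rpow_sub hs0, Real.rpow_one]
      field_simp
    calc T * ∫ t in Ioc (0:ℝ) (s/2), f t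
        ≤ T * (Real.exp (-(T * (s/2))) * ((s/2) ^ H / H)) :=
          mul_le_mul_of_nonneg_left step1 hT0.le
      _ = (T * Real.exp (-(T * (s/2)))) * ((s/2) ^ H / H) := by ring
      _ ≤ (2 / s) * ((s/2) ^ H / H) := by
          apply mul_le_mul_of_nonneg_right hTe
          positivity
      _ ≤ (2 / s) * (s ^ H / H) := by
          apply mul_le_mul_of_nonneg_left _ (by positivity)
          gcongr
      _ = (2 / H) * s ^ (H - 1) := heq
  have part2 : T * ∫ t in Ioc (s/2) 1, f t ≤ 4 * s ^ (H - 1) := by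
    have step1 : ∫ t in Ioc (s/2) 1, f t ≤
        ∫ t in Ioc (s/2) 1, Real.exp (-(T * |t - s|)) * (s/2) ^ (H - 1) := by
      apply setIntegral_mono_on (hint.mono_set hsub2)
        ((st8_ker_int T s _ _).mul_const _) measurableSet_Ioc
      intro t ht
      exact mul_le_mul_of_nonneg_left
        (Real.rpow_le_rpow_of_nonpos hs2 ht.1.le (by linarith)) (Real.exp_pos _).le
    rw [integral_mul_const] at step1
    have hker : T * ∫ t in Ioc (s/2) 1, Real.exp (-(T * |t - s|)) ≤ 2 :=
      st8_ker_int_le hT0 one_pos s (Ioc_subset_Ioc (by linarith) (by linarith))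
    have hhalf : (s/2 : ℝ) ^ (H - 1) ≤ 2 * s ^ (H - 1) := by
      have e1 : (s/2 : ℝ) ^ (H - 1) = s ^ (H - 1) * (2:ℝ) ^ (-(H - 1)) := by
        rw [show (s/2 : ℝ) = s * 2⁻¹ by ring, Real.mul_rpow hs0.le (by norm_num),
          Real.inv_rpow (by norm_num), ← Real.rpow_neg (by norm_num)]
      rw [e1]
      have e2 : (2:ℝ) ^ (-(H - 1)) ≤ 2 := by
        calc (2:ℝ) ^ (-(H - 1)) ≤ (2:ℝ) ^ (1:ℝ) :=
              Real.rpow_le_rpow_of_exponent_le (by norm_num) (by linarith)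
          _ = 2 := Real.rpow_one 2
      calc s ^ (H-1) * (2:ℝ) ^ (-(H - 1)) ≤ s ^ (H-1) * 2 :=
            mul_le_mul_of_nonneg_left e2 (Real.rpow_nonneg hs0.le _)
        _ = 2 * s ^ (H-1) := by ring
    have hnn : 0 ≤ (s/2 : ℝ) ^ (H - 1) := Real.rpow_nonneg hs2.le _
    calc T * ∫ t in Ioc (s/2) 1, f t
        ≤ T * ((∫ t in Ioc (s/2) 1, Real.exp (-(T * |t - s|))) * (s/2) ^ (H - 1)) :=
          mul_le_mul_of_nonneg_left step1 hT0.le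
      _ = (T * ∫ t in Ioc (s/2) 1, Real.exp (-(T * |t - s|))) * (s/2) ^ (H - 1) := by ring
      _ ≤ 2 * (s/2) ^ (H - 1) := mul_le_mul_of_nonneg_right hker hnn
      _ ≤ 2 * (2 * s ^ (H - 1)) := by linarith [hhalf]
      _ = 4 * s ^ (H - 1) := by ring
  have hG : st8G H T s = T * ∫ t in Ioc (0:ℝ) 1, f t := rfl
  rw [hG, hsplit, mul_add]
  linarith [part1, part2]

lemma st8_texp_tendsto {δ : ℝ} (hδ : 0 < δ) :
    Tendsto (fun T : ℝ => T * Real.exp (-(T * δ))) atTop (nhds 0) := by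
  have h1 : Tendsto (fun T : ℝ => δ * T) atTop atTop :=
    Tendsto.const_mul_atTop hδ tendsto_id
  have h2 := (Real.tendsto_pow_mul_exp_neg_atTop_nhds_zero 1).comp h1
  have h3 := h2.const_mul (1/δ)
  rw [mul_zero] at h3
  apply h3.congr
  intro T
  simp only [Function.comp_apply, pow_one]
  field_simp

lemma st8G_tendsto {H s : ℝ} (hH : 0 < H) (hH1 : H < 1) (hs0 : 0 < s) (hs1 : s < 1) :
    Tendsto (fun T => st8G H T s) atTop (nhds (2 * s ^ (H - 1))) := by
  rw [Metric.tendsto_atTop]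
  intro ε hε
  -- continuity of x ↦ 2 * x ^ (H-1) at s
  have hca : ContinuousAt (fun x : ℝ => 2 * x ^ (H - 1)) s :=
    continuousAt_const.mul (Real.continuousAt_rpow_const s (H - 1) (Or.inl hs0.ne'))
  rw [Metric.continuousAt_iff] at hca
  obtain ⟨δ', hδ'0, hδ'⟩ := hca (ε/4) (by linarith)
  set δ : ℝ := min (δ'/2) (min (s/2) ((1-s)/2)) with hδdef
  have hδ0 : 0 < δ := by
    apply lt_min (by linarith)
    exact lt_min (by linarith) (by linarith)
  have hδs : δ < s := by
    have h : δ ≤ s/2 := le_trans (min_le_right _ _) (min_le_left _ _)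
    linarith
  have hδ1 : s + δ ≤ 1 := by
    have h : δ ≤ (1-s)/2 := le_trans (min_le_right _ _) (min_le_right _ _)
    linarith
  have hδδ' : δ < δ' := by
    have : δ ≤ δ'/2 := min_le_left _ _
    linarith
  have hub : |2 * (s - δ) ^ (H - 1) - 2 * s ^ (H - 1)| < ε/4 := by
    have := hδ' (x := s - δ) (by rw [Real.dist_eq]; rw [abs_of_nonpos (by linarith)]; simpa using hδδ')
    rwa [Real.dist_eq] at this
  have hlb : |2 * (s + δ) ^ (H - 1) - 2 * s ^ (H - 1)| < ε/4 := by
    have := hδ' (x := s + δ) (by rw [Real.dist_eq]; rw [abs_of_nonneg (by linarith)]; simpa using hδδ')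
    rwa [Real.dist_eq] at this
  -- eventual smallness of error terms
  have hev1 : ∀ᶠ T in (atTop : Filter ℝ), T * Real.exp (-(T * δ)) * (1/H) < ε/4 := by
    have := (st8_texp_tendsto hδ0).mul_const (1/H)
    rw [zero_mul] at this
    have := this.eventually (eventually_lt_nhds (show (0:ℝ) < ε/4 by linarith))
    filter_upwards [this] with T hT using hT
  have hev2 : ∀ᶠ T in (atTop : Filter ℝ), 2 * Real.exp (-(T * δ)) * (s + δ) ^ (H - 1) < ε/4 := by
    have h0 : Tendsto (fun T : ℝ => 2 * Real.exp (-(T * δ)) * (s + δ) ^ (H - 1)) atTop (nhds 0) := by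
      have : Tendsto (fun T : ℝ => T * δ) atTop atTop :=
        Tendsto.atTop_mul_const hδ0 tendsto_id
      have h := (Real.tendsto_exp_neg_atTop_nhds_zero).comp this
      have h2 := (h.const_mul 2).mul_const ((s + δ) ^ (H - 1))
      simpa using h2
    have := h0.eventually (eventually_lt_nhds (show (0:ℝ) < ε/4 by linarith))
    filter_upwards [this] with T hT using hT
  rw [eventually_atTop] at hev1 hev2
  obtain ⟨N1, h1⟩ := hev1
  obtain ⟨N2, h2⟩ := hev2
  refine ⟨max 1 (max N1 N2), fun T hT => ?_⟩
  have hT1 : (1:ℝ) ≤ T := le_trans (le_max_left _ _) hT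
  have hT0 : 0 < T := lt_of_lt_of_le one_pos hT1
  have hTN1 : N1 ≤ T := le_trans (le_trans (le_max_left _ _) (le_max_right _ _)) hT
  have hTN2 : N2 ≤ T := le_trans (le_trans (le_max_right _ _) (le_max_right _ _)) hT
  have hup := st8G_upper hH hH1 hs0 hδ0 hδs hT0
  have hlo := st8G_lower hH hH1 hδ1 hδ0 hδs hT0
  rw [Real.dist_eq, abs_sub_lt_iff]
  constructor
  · -- st8G - 2 s^(H-1) < ε
    have e1 := h1 T hTN1
    have := abs_sub_lt_iff.1 hub
    nlinarith [this.1, this.2, e1, hup]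
  · -- 2 s^(H-1) - st8G < ε
    have e2 := h2 T hTN2
    have := abs_sub_lt_iff.1 hlb
    have hexpand : (2 - 2 * Real.exp (-(T * δ))) * (s + δ) ^ (H - 1) =
        2 * (s + δ) ^ (H - 1) - 2 * Real.exp (-(T * δ)) * (s + δ) ^ (H - 1) := by ring
    rw [hexpand] at hlo
    nlinarith [this.1, this.2, e2, hlo]

lemma st8_one_sub_rpow_integrable {c : ℝ} (hc : 0 < c) :
    IntegrableOn (fun s : ℝ => (1 - s) ^ (c - 1)) (Ioc (1/2 : ℝ) 1) := by
  have h : IntervalIntegrable (fun x : ℝ => x ^ (c - 1)) volume 0 (1/2) :=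
    intervalIntegral.intervalIntegrable_rpow' (by linarith)
  have h2 := h.comp_sub_left 1
  norm_num at h2
  exact h2.2

lemma st8_beta_integrable {H : ℝ} (hH : 0 < H) (hH2 : H < 1/2) :
    IntegrableOn (fun s : ℝ => s ^ (H - 1) * (1 - s) ^ (2*H - 1)) (Ioc (0:ℝ) 1) := by
  have hmeas : Measurable (fun s : ℝ => s ^ (H - 1) * (1 - s) ^ (2*H - 1)) :=
    (measurable_id.pow_const _).mul ((measurable_const.sub measurable_id).pow_const _)
  have h1 : IntegrableOn (fun s : ℝ => s ^ (H - 1) * (1 - s) ^ (2*H - 1)) (Ioc 0 (1/2)) := by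
    apply Integrable.mono' (((st8_rpow_integrable hH (1/2)).mul_const
      ((1/2 : ℝ) ^ (2*H - 1))))
    · exact hmeas.aestronglyMeasurable
    · filter_upwards [ae_restrict_mem measurableSet_Ioc] with s hs
      have hs1 : (0:ℝ) < 1 - s := by linarith [hs.2]
      rw [Real.norm_eq_abs, abs_of_nonneg (mul_nonneg (Real.rpow_nonneg hs.1.le _)
        (Real.rpow_nonneg hs1.le _))]
      apply mul_le_mul_of_nonneg_left _ (Real.rpow_nonneg hs.1.le _)
      exact Real.rpow_le_rpow_of_nonpos (by norm_num) (by linarith [hs.2]) (by linarith)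
  have h2 : IntegrableOn (fun s : ℝ => s ^ (H - 1) * (1 - s) ^ (2*H - 1)) (Ioc (1/2) 1) := by
    apply Integrable.mono' ((st8_one_sub_rpow_integrable (show (0:ℝ) < 2*H by linarith)).const_mul
      ((1/2 : ℝ) ^ (H - 1)))
    · exact hmeas.aestronglyMeasurable
    · filter_upwards [ae_restrict_mem measurableSet_Ioc] with s hs
      have hs0 : (0:ℝ) < s := by linarith [hs.1]
      have hs1 : (0:ℝ) ≤ 1 - s := by linarith [hs.2]
      rw [Real.norm_eq_abs, abs_of_nonneg (mul_nonneg (Real.rpow_nonneg hs0.le _)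
        (Real.rpow_nonneg hs1 _))]
      have : (2*H - 1) = (2*H) - 1 := by ring
      rw [this]
      apply mul_le_mul_of_nonneg_right _ (Real.rpow_nonneg hs1 _)
      exact Real.rpow_le_rpow_of_nonpos (by norm_num) hs.1.le (by linarith)
  have := h1.union h2
  rwa [Ioc_union_Ioc_eq_Ioc (by norm_num) (by norm_num)] at this

lemma st8_beta_reflect {H : ℝ} (hH : 0 < H) (hH2 : H < 1/2) :
    ∫ s in Ioc (0:ℝ) 1, s ^ (H - 1) * (1 - s) ^ (2*H - 1)
      = ∫ x in Ioc (0:ℝ) 1, x ^ (2*H - 1) * (1 - x) ^ (H - 1) := by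
  rw [← intervalIntegral.integral_of_le zero_le_one, ← intervalIntegral.integral_of_le zero_le_one]
  have : ∀ s : ℝ, s ^ (H - 1) * (1 - s) ^ (2*H - 1)
      = (fun x : ℝ => x ^ (2*H - 1) * (1 - x) ^ (H - 1)) (1 - s) := by
    intro s
    simp only [sub_sub_cancel]
    ring
  rw [intervalIntegral.integral_congr (g := fun s : ℝ =>
    (fun x : ℝ => x ^ (2*H - 1) * (1 - x) ^ (H - 1)) (1 - s)) (fun s _ => this s),
    intervalIntegral.integral_comp_sub_left (fun x : ℝ => x ^ (2*H - 1) * (1 - x) ^ (H - 1)) 1]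
  norm_num

lemma st8_value {H : ℝ} (hH : 0 < H) (hH2 : H < 1/2) :
    ∫ s in Ioc (0:ℝ) 1, 2 * s ^ (H - 1) * (H * ((1 - s) ^ (2*H - 1) - 1))
      = 2 * ((∫ x in Ioc (0:ℝ) 1, x ^ (2*H - 1) * (1 - x) ^ (H - 1)) * H - 1) := by
  have hcongr : ∀ s : ℝ, 2 * s ^ (H - 1) * (H * ((1 - s) ^ (2*H - 1) - 1))
      = (2*H) * (s ^ (H - 1) * (1 - s) ^ (2*H - 1)) - (2*H) * s ^ (H - 1) := by
    intro s; ring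
  rw [show (fun s : ℝ => 2 * s ^ (H - 1) * (H * ((1 - s) ^ (2*H - 1) - 1))) =
    (fun s : ℝ => (2*H) * (s ^ (H - 1) * (1 - s) ^ (2*H - 1)) - (2*H) * s ^ (H - 1)) from
      funext hcongr]
  rw [integral_sub ((st8_beta_integrable hH hH2).const_mul (2*H))
      ((st8_rpow_integrable hH 1).const_mul (2*H)),
    integral_const_mul, integral_const_mul, st8_int_rpow hH zero_le_one,
    st8_beta_reflect hH hH2, Real.one_rpow]
  field_simp

lemma st8_ae_Ioo : ∀ᵐ s ∂(volume.restrict (Ioc (0:ℝ) 1)), s ∈ Ioo (0:ℝ) 1 := by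
  rw [← MeasureTheory.Measure.restrict_congr_set Ioo_ae_eq_Ioc]
  exact ae_restrict_mem measurableSet_Ioo

lemma st8G_cont {H : ℝ} (hH : 0 < H) {T : ℝ} (hT : 0 ≤ T) :
    Continuous (fun s => st8G H T s) := by
  apply continuous_const.mul
  apply MeasureTheory.continuous_of_dominated
    (bound := fun t : ℝ => t ^ (H - 1))
  · intro s
    exact ((st8_ker_cont T s).measurable.mul
      (measurable_id.pow_const (H - 1))).aestronglyMeasurable
  · intro s
    filter_upwards [ae_restrict_mem measurableSet_Ioc] with t ht
    rw [Real.norm_eq_abs, abs_of_nonneg (st8_integrand_nonneg hT s ht.1.le)]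
    exact st8_integrand_le hT s ht.1.le
  · exact st8_rpow_integrable hH 1
  · filter_upwards with t
    have : Continuous fun s : ℝ => Real.exp (-(T * |t - s|)) := by continuity
    exact this.mul continuous_const

lemma st8_psi_nonneg {H s : ℝ} (hH : 0 < H) (hH2 : H < 1/2) (hs0 : 0 < s) (hs1 : s < 1) :
    0 ≤ H * ((1 - s) ^ (2*H - 1) - 1) := by
  have h1 : (1:ℝ) ≤ (1 - s) ^ (2*H - 1) :=
    Real.one_le_rpow_of_pos_of_le_one_of_nonpos (by linarith) (by linarith) (by linarith)
  nlinarith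

lemma st8_psi_le {H s : ℝ} (hH : 0 < H) (hs0 : 0 < s) (hs1 : s < 1) :
    H * ((1 - s) ^ (2*H - 1) - 1) ≤ H * (1 - s) ^ (2*H - 1) := by
  nlinarith [Real.rpow_nonneg (show (0:ℝ) ≤ 1 - s by linarith) (2*H - 1)]

lemma st8_dct {H : ℝ} (hH : 0 < H) (hH2 : H < 1/2) :
    Tendsto (fun T : ℝ => ∫ s in Ioc (0:ℝ) 1,
        st8G H T s * (H * ((1 - s) ^ (2*H - 1) - 1))) atTop
      (nhds (∫ s in Ioc (0:ℝ) 1, 2 * s ^ (H - 1) * (H * ((1 - s) ^ (2*H - 1) - 1)))) := by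
  have hH1 : H < 1 := by linarith
  have hpsi_meas : Measurable (fun s : ℝ => H * ((1 - s) ^ (2*H - 1) - 1)) :=
    measurable_const.mul (((measurable_const.sub measurable_id).pow_const _).sub measurable_const)
  apply MeasureTheory.tendsto_integral_filter_of_dominated_convergence
    (bound := fun s : ℝ => ((4 + 2/H) * H) * (s ^ (H - 1) * (1 - s) ^ (2*H - 1)))
  · filter_upwards [eventually_ge_atTop (0:ℝ)] with T hT
    exact ((st8G_cont hH hT).measurable.mul hpsi_meas).aestronglyMeasurable
  · filter_upwards [eventually_ge_atTop (1:ℝ)] with T hT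
    filter_upwards [st8_ae_Ioo] with s hs
    have hG0 : 0 ≤ st8G H T s := st8G_nonneg (by linarith) s
    have hpsi0 : 0 ≤ H * ((1 - s) ^ (2*H - 1) - 1) := st8_psi_nonneg hH hH2 hs.1 hs.2
    rw [Real.norm_eq_abs, abs_of_nonneg (mul_nonneg hG0 hpsi0)]
    calc st8G H T s * (H * ((1 - s) ^ (2*H - 1) - 1))
        ≤ ((4 + 2/H) * s ^ (H - 1)) * (H * (1 - s) ^ (2*H - 1)) := by
          apply mul_le_mul (st8G_bound hH hH1 hs.1 hs.2.le hT)
            (st8_psi_le hH hs.1 hs.2) hpsi0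
          have h4 : (0:ℝ) < 2/H := div_pos two_pos hH
          exact mul_nonneg (by linarith) (Real.rpow_nonneg hs.1.le _)
      _ = ((4 + 2/H) * H) * (s ^ (H - 1) * (1 - s) ^ (2*H - 1)) := by ring
  · exact (st8_beta_integrable hH hH2).const_mul _
  · filter_upwards [st8_ae_Ioo] with s hs
    exact (st8G_tendsto hH hH1 hs.1 hs.2).mul_const _

lemma st8_inner_scale {H T s : ℝ} (hT : 0 < T) :
    ∫ u in Ioc (0:ℝ) T, Real.exp (-|u - T * s|) * u ^ (H - 1)
      = T ^ (H - 1) * st8G H T s := by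
  have key := intervalIntegral.smul_integral_comp_mul_left
    (fun u => Real.exp (-|u - T * s|) * u ^ (H - 1)) T (a := 0) (b := 1)
  norm_num at key
  rw [← intervalIntegral.integral_of_le hT.le, ← key,
    intervalIntegral.integral_of_le zero_le_one]
  have hcongr : ∀ t ∈ Ioc (0:ℝ) 1,
      Real.exp (-|T * t - T * s|) * (T * t) ^ (H - 1)
        = T ^ (H - 1) * (Real.exp (-(T * |t - s|)) * t ^ (H - 1)) := by
    intro t ht
    rw [show T * t - T * s = T * (t - s) by ring, abs_mul, abs_of_pos hT,
      Real.mul_rpow hT.le ht.1.le]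
    ring
  rw [setIntegral_congr_fun measurableSet_Ioc hcongr, integral_const_mul, st8G]
  ring

lemma st8_weight_eq {H T s : ℝ} (hH : 0 < H) (hH2 : H < 1/2) (hT : 0 < T)
    (hs0 : 0 < s) (hs1 : s < 1) :
    |H * (T ^ (2*H - 1) - Real.sign (T - T * s) * |T - T * s| ^ (2*H - 1))|
      = T ^ (2*H - 1) * (H * ((1 - s) ^ (2*H - 1) - 1)) := by
  have hpos : 0 < T - T * s := by nlinarith
  rw [Real.sign_of_pos hpos, one_mul, abs_of_pos hpos,
    show T - T * s = T * (1 - s) by ring, Real.mul_rpow hT.le (by linarith)]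
  have h1 : (1:ℝ) ≤ (1 - s) ^ (2*H - 1) :=
    Real.one_le_rpow_of_pos_of_le_one_of_nonpos (by linarith) (by linarith) (by linarith)
  have hTp : (0:ℝ) ≤ T ^ (2*H - 1) := Real.rpow_nonneg hT.le _
  have h2 : T ^ (2*H - 1) * 1 ≤ T ^ (2*H - 1) * (1 - s) ^ (2*H - 1) :=
    mul_le_mul_of_nonneg_left h1 hTp
  rw [abs_of_nonpos (by nlinarith [hH.le])]
  ring

lemma st8_reduction {H : ℝ} (hH : 0 < H) (hH2 : H < 1/2) {T : ℝ} (hT : 0 < T) :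
    (∫ w in Ioc (0:ℝ) T, ∫ u in Ioc (0:ℝ) T,
        Real.exp (-|u - w|) * u ^ (H - 1) *
          |H * (T ^ (2*H - 1) - Real.sign (T - w) * |T - w| ^ (2*H - 1))|)
      / T ^ (3*H - 1)
    = ∫ s in Ioc (0:ℝ) 1, st8G H T s * (H * ((1 - s) ^ (2*H - 1) - 1)) := by
  have step1 : ∀ w : ℝ, (∫ u in Ioc (0:ℝ) T,
        Real.exp (-|u - w|) * u ^ (H - 1) *
          |H * (T ^ (2*H - 1) - Real.sign (T - w) * |T - w| ^ (2*H - 1))|)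
      = (∫ u in Ioc (0:ℝ) T, Real.exp (-|u - w|) * u ^ (H - 1)) *
          |H * (T ^ (2*H - 1) - Real.sign (T - w) * |T - w| ^ (2*H - 1))| := by
    intro w
    exact integral_mul_const _ _
  simp only [step1]
  have key := intervalIntegral.smul_integral_comp_mul_left
    (fun w => (∫ u in Ioc (0:ℝ) T, Real.exp (-|u - w|) * u ^ (H - 1)) *
        |H * (T ^ (2*H - 1) - Real.sign (T - w) * |T - w| ^ (2*H - 1))|) T (a := 0) (b := 1)
  simp only [smul_eq_mul, mul_zero, mul_one] at key
  rw [← intervalIntegral.integral_of_le hT.le, ← key,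
    intervalIntegral.integral_of_le zero_le_one]
  have hae : ∀ᵐ s : ℝ ∂volume, s ∈ Ioc (0:ℝ) 1 →
      ((∫ u in Ioc (0:ℝ) T, Real.exp (-|u - T*s|) * u ^ (H - 1)) *
          |H * (T ^ (2*H - 1) - Real.sign (T - T*s) * |T - T*s| ^ (2*H - 1))|)
      = (T ^ (H - 1) * T ^ (2*H - 1)) *
          (st8G H T s * (H * ((1 - s) ^ (2*H - 1) - 1))) := by
    have h1 : ∀ᵐ s : ℝ ∂volume, s ∉ ({1} : Set ℝ) :=
      (MeasureTheory.measure_eq_zero_iff_ae_notMem).1 Real.volume_singleton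
    filter_upwards [h1] with s hs1 hmem
    have hslt : s < 1 := lt_of_le_of_ne hmem.2 (by simpa using hs1)
    rw [st8_inner_scale hT, st8_weight_eq hH hH2 hT hmem.1 hslt]
    ring
  rw [setIntegral_congr_ae measurableSet_Ioc hae, integral_const_mul]
  have hne : T ^ (3*H - 1) ≠ 0 := (Real.rpow_pos_of_pos hT _).ne'
  have hpow : T * (T ^ (H - 1) * T ^ (2*H - 1)) = T ^ (3*H - 1) := by
    nth_rewrite 1 [show T = T ^ (1:ℝ) from (Real.rpow_one T).symm]
    rw [← Real.rpow_add hT, ← Real.rpow_add hT]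
    norm_num
    ring_nf
  rw [show T * ((T ^ (H - 1) * T ^ (2*H - 1)) *
      ∫ s in Ioc (0:ℝ) 1, st8G H T s * (H * ((1 - s) ^ (2*H - 1) - 1)))
      = (T * (T ^ (H - 1) * T ^ (2*H - 1))) *
      ∫ s in Ioc (0:ℝ) 1, st8G H T s * (H * ((1 - s) ^ (2*H - 1) - 1)) from by ring,
    hpow, mul_div_assoc, mul_comm, div_mul_cancel₀ _ hne]

theorem stmt8 (H : ℝ) (hH : H ∈ Set.Ioo (0:ℝ) (1/2)) :
    Filter.Tendsto
      (fun T : ℝ =>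
        (∫ w in Set.Ioc (0:ℝ) T, ∫ u in Set.Ioc (0:ℝ) T,
            Real.exp (-|u - w|) * u ^ (H - 1) *
              |H * (T ^ (2*H - 1) - Real.sign (T - w) * |T - w| ^ (2*H - 1))|)
          / T ^ (3*H - 1))
      Filter.atTop
      (nhds (2 * ((∫ x in Set.Ioc (0:ℝ) 1, x ^ (2*H - 1) * (1 - x) ^ (H - 1)) * H - 1))) := by
  obtain ⟨hH0, hH2⟩ := hH
  have hdct := st8_dct hH0 hH2
  rw [st8_value hH0 hH2] at hdct
  apply hdct.congr'
  filter_upwards [eventually_gt_atTop (0:ℝ)] with T hT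
  exact (st8_reduction hH0 hH2 hT).symm
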